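/- Fix a Følner sequence (F_n) for G and a factor map π : X → Y. For any finite measurable partition Q of X and any 0 < ε < 1, there exists ε' > 0 (one may take ε' = (ε/2)^4) such that: for every finite measurable partition Q' of X indexed by the same set and satisfying dist_μ(Q, Q') ≤ ε', one has cov(μ, Q, F_n, ε | π) ≤ cov(μ, Q', F_n, ε' | π) for all sufficiently large n. -/

import Mathlib

open MeasureTheory Filter Set Topology
open scoped ENNReal Classical symmDiff

section SlowEntropyDefs

variable {G : Type*} [Group G]

/-- A measure-preserving action of a group `G` on a probability space. -/
structure IsMPSystem {X : Type*} [MeasurableSpace X] (T : G → X → X) (μ : Measure X) : Prop where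
  prob : IsProbabilityMeasure μ
  meas : ∀ g, Measurable (T g)
  mp : ∀ g, MeasurePreserving (T g) μ μ
  mul : ∀ g g' x, T (g * g') x = T g (T g' x)
  one : ∀ x, T 1 x = x

/-- A factor map between measure-preserving `G`-systems. -/
structure IsFactorMap {X Y : Type*} [MeasurableSpace X] [MeasurableSpace Y]
    (T : G → X → X) (μ : Measure X) (S : G → Y → Y) (ν : Measure Y) (π : X → Y) : Prop where
  meas : Measurable π
  map : μ.map π = ν
  equiv : ∀ g x, π (T g x) = S g (π x)

/-- An isomorphism of measure-preserving `G`-systems: a factor map with an a.e. two-sided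
inverse factor map. -/
def IsIsomorphism {X Y : Type*} [MeasurableSpace X] [MeasurableSpace Y]
    (T : G → X → X) (μ : Measure X) (S : G → Y → Y) (ν : Measure Y) (π : X → Y) : Prop :=
  IsFactorMap T μ S ν π ∧ ∃ ρ : Y → X, IsFactorMap S ν T μ ρ ∧
    (∀ᵐ x ∂μ, ρ (π x) = x) ∧ (∀ᵐ y ∂ν, π (ρ y) = y)

/-- `μy` is a disintegration of `μ` over the map `π : X → Y` (with `ν` the image of `μ`). -/
structure IsDisintegration {X Y : Type*} [MeasurableSpace X] [MeasurableSpace Y]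
    (μ : Measure X) (ν : Measure Y) (π : X → Y) (μy : Y → Measure X) : Prop where
  prob : ∀ y, IsProbabilityMeasure (μy y)
  meas : ∀ s : Set X, MeasurableSet s → Measurable fun y => μy y s
  eq : ∀ s : Set X, MeasurableSet s → μ s = ∫⁻ y, μy y s ∂ν
  supp : ∀ᵐ y ∂ν, μy y (π ⁻¹' {y}) = 1

/-- A (left) Følner sequence for `G`: a sequence of nonempty finite subsets `F n ⊆ G` with
`|gFₙ ∩ Fₙ| / |Fₙ| → 1` for every `g ∈ G`. -/
def IsFolner (F : ℕ → Finset G) : Prop :=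
  (∀ n, (F n).Nonempty) ∧ ∀ g : G,
    Tendsto (fun n => ((((F n).image fun h => g * h) ∩ F n).card : ℝ) / ((F n).card : ℝ))
      atTop (nhds 1)

/-- The normalized Hamming distance `d_{P,F}` between the `(P,F)`-names of two points. -/
noncomputable def hamDist {X : Type*} (T : G → X → X) {r : ℕ} (P : X → Fin r)
    (F : Finset G) (x x' : X) : ℝ :=
  ((F.filter fun f => P (T f x) ≠ P (T f x')).card : ℝ) / (F.card : ℝ)

/-- The set `E` has `d_{P,F}`-diameter at most `ε`. -/
def diamLE {X : Type*} (T : G → X → X) {r : ℕ} (P : X → Fin r) (F : Finset G)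
    (E : Set X) (ε : ℝ) : Prop :=
  ∀ x ∈ E, ∀ x' ∈ E, hamDist T P F x x' ≤ ε

/-- The Hamming `ε`-covering number `cov(λ, P, F, ε)`: the smallest `M` such that there are
sets `E₁, …, E_M` of `d_{P,F}`-diameter at most `ε` whose union has `λ`-measure `≥ 1 - ε`. -/
noncomputable def hamCov {X : Type*} [MeasurableSpace X] (T : G → X → X) (lam : Measure X)
    {r : ℕ} (P : X → Fin r) (F : Finset G) (ε : ℝ) : ℕ :=
  sInf {M : ℕ | ∃ E : Fin M → Set X, (∀ i, diamLE T P F (E i) ε) ∧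
    ENNReal.ofReal (1 - ε) ≤ lam (⋃ i, E i)}

/-- The relative Hamming `ε`-covering number `cov(μ, P, F, ε | π)`, defined through the
disintegration `μy` of `μ` over `π` and the image measure `ν`: the smallest `M` such that
there exists `S ⊆ Y` with `ν S ≥ 1 - ε` and `cov(μ_y, P, F, ε) ≤ M` for every `y ∈ S`. -/
noncomputable def hamCovRel {X Y : Type*} [MeasurableSpace X] [MeasurableSpace Y]
    (T : G → X → X) (μy : Y → Measure X) (ν : Measure Y) {r : ℕ} (P : X → Fin r)
    (F : Finset G) (ε : ℝ) : ℕ :=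
  sInf {M : ℕ | ∃ S : Set Y, MeasurableSet S ∧ ENNReal.ofReal (1 - ε) ≤ ν S ∧
    ∀ y ∈ S, hamCov T (μy y) P F ε ≤ M}

/-- A rate function: an increasing positive function on `ℕ` tending to infinity. -/
def IsRateFunction (U : ℕ → ℝ) : Prop :=
  (∀ n, 0 < U n) ∧ Monotone U ∧ Tendsto U atTop atTop

/-- Relative slow entropy of a partition:
`sup_{ε>0} limsup_n cov(μ, P, F_n, ε | π) / U(|F_n|)`, valued in `[0,∞]`. -/
noncomputable def slowEntropyPartRel {X Y : Type*} [MeasurableSpace X] [MeasurableSpace Y]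
    (T : G → X → X) (μy : Y → Measure X) (ν : Measure Y) {r : ℕ} (P : X → Fin r)
    (U : ℕ → ℝ) (F : ℕ → Finset G) : ℝ≥0∞ :=
  ⨆ ε ∈ Ioi (0 : ℝ),
    Filter.limsup
      (fun n => ENNReal.ofReal ((hamCovRel T μy ν P (F n) ε : ℝ) / U (F n).card)) atTop

/-- Relative slow entropy: the supremum over all finite measurable partitions. -/
noncomputable def slowEntropyRel {X Y : Type*} [MeasurableSpace X] [MeasurableSpace Y]
    (T : G → X → X) (μy : Y → Measure X) (ν : Measure Y)
    (U : ℕ → ℝ) (F : ℕ → Finset G) : ℝ≥0∞ :=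
  ⨆ (r : ℕ) (P : X → Fin r) (_ : Measurable P), slowEntropyPartRel T μy ν P U F

/-- The partition distance `dist_λ(P, Q) = λ{x : P(x) ≠ Q(x)}` between two labeled
partitions indexed by the same set. -/
noncomputable def partDist {Z : Type*} [MeasurableSpace Z] (lam : Measure Z)
    {ι : Type*} (P Q : Z → ι) : ℝ≥0∞ :=
  lam {z | P z ≠ Q z}

/-- Ergodicity of a measure-preserving `G`-action. -/
def IsErgodicAction {X : Type*} [MeasurableSpace X] (T : G → X → X) (μ : Measure X) : Prop :=
  ∀ s : Set X, MeasurableSet s → (∀ g, T g ⁻¹' s = s) → μ s = 0 ∨ μ s = 1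

end SlowEntropyDefs



/-- Auxiliary: the "full name" cover shows the covering-number defining set contains
`Fintype.card (↥F → Fin r)`. -/
lemma fullCover_mem {G X : Type*} [MeasurableSpace X] (T : G → X → X) (lam : Measure X)
    [IsProbabilityMeasure lam] {r : ℕ} (P : X → Fin r) (F : Finset G) {ε : ℝ} (hε : 0 ≤ ε) :
    Fintype.card (↥F → Fin r) ∈ {M : ℕ | ∃ E : Fin M → Set X, (∀ i, diamLE T P F (E i) ε) ∧
      ENNReal.ofReal (1 - ε) ≤ lam (⋃ i, E i)} := by
  classical
  set e := Fintype.equivFin (↥F → Fin r) with he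
  refine ⟨fun i => {x | ∀ f : ↥F, P (T ↑f x) = e.symm i f}, ?_, ?_⟩
  · intro i x hx x' hx'
    have hemp : (F.filter fun f => P (T f x) ≠ P (T f x')) = ∅ := by
      rw [Finset.filter_eq_empty_iff]
      intro f hf
      simp only [ne_eq, not_not]
      rw [hx ⟨f, hf⟩, hx' ⟨f, hf⟩]
    simp only [hamDist, hemp, Finset.card_empty, Nat.cast_zero, zero_div]
    exact hε
  · have huniv : (⋃ i, {x | ∀ f : ↥F, P (T ↑f x) = e.symm i f}) = Set.univ := by
      rw [Set.eq_univ_iff_forall]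
      intro x
      exact Set.mem_iUnion.2 ⟨e fun f => P (T ↑f x), fun f => by simp⟩
    rw [huniv, measure_univ]
    exact (ENNReal.ofReal_le_ofReal (by linarith)).trans_eq ENNReal.ofReal_one

/-- Lemma `ApproximateByNearbyPartition`.
For any finite measurable partition `Q` of `X` and any `0 < ε < 1` there exists `ε' > 0`
such that whenever `Q'` is a partition (with the same index set) with `dist_μ(Q,Q') ≤ ε'`,
one has `cov(μ, Q, F_n, ε | π) ≤ cov(μ, Q', F_n, ε' | π)` for all sufficiently large `n`. -/
theorem relative_cov_approximate_by_nearby_partition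
    {G X Y : Type*} [Group G] [Countable G]
    [MeasurableSpace X] [MeasurableSpace Y] [StandardBorelSpace X] [StandardBorelSpace Y]
    (T : G → X → X) (μ : Measure X) (S : G → Y → Y) (ν : Measure Y)
    (hX : IsMPSystem T μ) (hY : IsMPSystem S ν)
    (π : X → Y) (hπ : IsFactorMap T μ S ν π)
    (μy : Y → Measure X) (hdis : IsDisintegration μ ν π μy)
    (F : ℕ → Finset G) (hF : IsFolner F)
    (r : ℕ) (Q : X → Fin r) (hQ : Measurable Q)
    (ε : ℝ) (hε0 : 0 < ε) (hε1 : ε < 1) :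
    ∃ ε' > 0, ∀ Q' : X → Fin r, Measurable Q' →
      partDist μ Q Q' ≤ ENNReal.ofReal ε' →
      ∀ᶠ n in atTop, hamCovRel T μy ν Q (F n) ε ≤ hamCovRel T μy ν Q' (F n) ε' := by
  classical
  have hδ0 : (0:ℝ) < ε / 2 := by linarith
  set δ : ℝ := ε / 2 with hδdef
  have hδ1 : δ ≤ 1 := by rw [hδdef]; linarith
  have hδ4 : δ ^ 4 ≤ δ := by
    have h3 : δ ^ 3 ≤ 1 := pow_le_one₀ hδ0.le hδ1
    calc δ ^ 4 = δ ^ 3 * δ := by ring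
      _ ≤ 1 * δ := mul_le_mul_of_nonneg_right h3 hδ0.le
      _ = δ := one_mul δ
  have hεbound : δ ^ 4 + 2 * δ ^ 2 ≤ ε := by
    have h2 : δ ^ 2 ≤ δ := by nlinarith
    nlinarith
  refine ⟨δ ^ 4, by positivity, ?_⟩
  intro Q' hQ' hdist
  haveI := hX.prob
  haveI : IsProbabilityMeasure ν := hπ.map ▸ Measure.isProbabilityMeasure_map hπ.meas.aemeasurable
  refine Filter.eventually_atTop.2 ⟨0, fun n _ => ?_⟩
  set Fn := F n with hFndef
  have hFne : Fn.Nonempty := hF.1 n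
  have hN0 : (0:ℝ) < (Fn.card : ℝ) := by exact_mod_cast Finset.card_pos.2 hFne
  set N : ℝ := (Fn.card : ℝ) with hNdef
  -- the difference set D and its measure
  set D : Set X := {x | Q x ≠ Q' x} with hDdef
  have hD : MeasurableSet D := by
    have hset : {x | Q x = Q' x} = ⋃ i : Fin r, Q ⁻¹' {i} ∩ Q' ⁻¹' {i} := by
      ext x
      simp only [Set.mem_setOf_eq, Set.mem_iUnion, Set.mem_inter_iff, Set.mem_preimage,
        Set.mem_singleton_iff]
      constructor
      · intro h; exact ⟨Q x, rfl, h.symm⟩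
      · rintro ⟨i, h1, h2⟩; rw [h1, h2]
    have hm : MeasurableSet {x | Q x = Q' x} := by
      rw [hset]
      exact MeasurableSet.iUnion fun i =>
        (hQ (measurableSet_singleton i)).inter (hQ' (measurableSet_singleton i))
    have hDeq : D = {x | Q x = Q' x}ᶜ := by ext x; simp [hDdef]
    rw [hDeq]; exact hm.compl
  have hμD : μ D ≤ ENNReal.ofReal (δ ^ 4) := hdist
  -- the counting function and the bad set B
  set cnt : X → ℕ := fun x => (Fn.filter fun g => Q (T g x) ≠ Q' (T g x)).card with hcnt
  have hfeq : (fun x => ((cnt x : ℝ≥0∞))) =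
      fun x => ∑ g ∈ Fn, (T g ⁻¹' D).indicator (1 : X → ℝ≥0∞) x := by
    funext x
    simp only [hcnt, Finset.card_filter]
    push_cast
    refine Finset.sum_congr rfl fun g hg => ?_
    simp [Set.indicator_apply, hDdef]
  have hfmeas : Measurable fun x => ((cnt x : ℝ≥0∞)) := by
    rw [hfeq]
    exact Finset.measurable_sum _ fun g _ => measurable_one.indicator ((hX.meas g) hD)
  have hlint : ∫⁻ x, (cnt x : ℝ≥0∞) ∂μ = Fn.card * μ D := by
    rw [show (fun x => ((cnt x : ℝ≥0∞))) =
        (fun x => ∑ g ∈ Fn, (T g ⁻¹' D).indicator (1 : X → ℝ≥0∞) x) from hfeq]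
    rw [lintegral_finset_sum _ fun g _ => measurable_one.indicator ((hX.meas g) hD)]
    have hterm : ∀ g ∈ Fn, ∫⁻ x, (T g ⁻¹' D).indicator (1 : X → ℝ≥0∞) x ∂μ = μ D := by
      intro g _
      rw [lintegral_indicator_one ((hX.meas g) hD)]
      exact (hX.mp g).measure_preimage hD.nullMeasurableSet
    rw [Finset.sum_congr rfl hterm, Finset.sum_const, nsmul_eq_mul]
  set B : Set X := {x | δ ^ 2 * N ≤ (cnt x : ℝ)} with hBdef
  have hBiff : ∀ x, x ∈ B ↔ ENNReal.ofReal (δ ^ 2 * N) ≤ (cnt x : ℝ≥0∞) := by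
    intro x
    rw [hBdef, Set.mem_setOf_eq, ← ENNReal.ofReal_natCast,
      ENNReal.ofReal_le_ofReal_iff (Nat.cast_nonneg _)]
  have hB : MeasurableSet B := by
    have : B = {x | ENNReal.ofReal (δ ^ 2 * N) ≤ (cnt x : ℝ≥0∞)} := Set.ext hBiff
    rw [this]
    exact measurableSet_le measurable_const hfmeas
  have hμB : μ B ≤ ENNReal.ofReal (δ ^ 2) := by
    have h1 : μ B ≤ (∫⁻ x, (cnt x : ℝ≥0∞) ∂μ) / ENNReal.ofReal (δ ^ 2 * N) := by
      refine le_trans (measure_mono fun x hx => (hBiff x).1 hx) ?_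
      exact meas_ge_le_lintegral_div hfmeas.aemeasurable
        (ENNReal.ofReal_pos.2 (by positivity)).ne' ENNReal.ofReal_ne_top
    refine h1.trans ?_
    rw [hlint, show ((Fn.card : ℕ) : ℝ≥0∞) = ENNReal.ofReal N from
      (ENNReal.ofReal_natCast _).symm]
    have h2 : ENNReal.ofReal N * μ D / ENNReal.ofReal (δ ^ 2 * N) ≤
        ENNReal.ofReal N * ENNReal.ofReal (δ ^ 4) / ENNReal.ofReal (δ ^ 2 * N) := by
      gcongr
    refine h2.trans_eq ?_
    rw [← ENNReal.ofReal_mul hN0.le, ← ENNReal.ofReal_div_of_pos (by positivity)]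
    congr 1
    have hNne : N ≠ 0 := ne_of_gt hN0
    have hδne : δ ≠ 0 := ne_of_gt hδ0
    field_simp
  -- the good set A of fibers
  set A : Set Y := {y | μy y B ≤ ENNReal.ofReal δ} with hAdef
  have hAm : MeasurableSet A := measurableSet_le (hdis.meas B hB) measurable_const
  have hνAc : ν Aᶜ ≤ ENNReal.ofReal δ := by
    have h1 : ν Aᶜ ≤ (∫⁻ y, μy y B ∂ν) / ENNReal.ofReal δ := by
      refine le_trans (measure_mono fun y hy => ?_)
        (meas_ge_le_lintegral_div (hdis.meas B hB).aemeasurable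
          (ENNReal.ofReal_pos.2 hδ0).ne' ENNReal.ofReal_ne_top)
      simp only [hAdef, Set.mem_compl_iff, Set.mem_setOf_eq, not_le] at hy
      exact le_of_lt hy
    refine h1.trans ?_
    rw [← hdis.eq B hB]
    calc μ B / ENNReal.ofReal δ ≤ ENNReal.ofReal (δ ^ 2) / ENNReal.ofReal δ := by gcongr
      _ = ENNReal.ofReal (δ ^ 2 / δ) := (ENNReal.ofReal_div_of_pos hδ0).symm
      _ = ENNReal.ofReal δ := by rw [sq, mul_div_assoc, div_self (ne_of_gt hδ0), mul_one]
  -- the defining set for `hamCovRel` of `Q'` is nonempty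
  have hrelQ'ne : Set.Nonempty {M : ℕ | ∃ S : Set Y, MeasurableSet S ∧
      ENNReal.ofReal (1 - δ ^ 4) ≤ ν S ∧ ∀ y ∈ S, hamCov T (μy y) Q' Fn (δ ^ 4) ≤ M} := by
    refine ⟨Fintype.card (↥Fn → Fin r), Set.univ, MeasurableSet.univ, ?_, fun y _ => ?_⟩
    · rw [measure_univ]
      exact (ENNReal.ofReal_le_ofReal (by nlinarith)).trans_eq ENNReal.ofReal_one
    · haveI := hdis.prob y
      exact Nat.sInf_le (fullCover_mem T (μy y) Q' Fn (by positivity))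
  obtain ⟨S', hS'm, hS'ν, hS'cov⟩ := Nat.sInf_mem hrelQ'ne
  refine Nat.sInf_le ⟨S' ∩ A, hS'm.inter hAm, ?_, ?_⟩
  · -- measure of the good fiber set
    have hsub : S' ⊆ (S' ∩ A) ∪ Aᶜ := by
      intro y hy
      by_cases h : y ∈ A
      · exact Or.inl ⟨hy, h⟩
      · exact Or.inr h
    have h2 : ν S' ≤ ν (S' ∩ A) + ENNReal.ofReal δ :=
      ((measure_mono hsub).trans (measure_union_le _ _)).trans (add_le_add le_rfl hνAc)
    have h3 : ENNReal.ofReal (1 - ε) + ENNReal.ofReal δ ≤ ν (S' ∩ A) + ENNReal.ofReal δ := by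
      calc ENNReal.ofReal (1 - ε) + ENNReal.ofReal δ
          = ENNReal.ofReal (1 - ε + δ) := (ENNReal.ofReal_add (by linarith) hδ0.le).symm
        _ ≤ ENNReal.ofReal (1 - δ ^ 4) := ENNReal.ofReal_le_ofReal (by
            rw [hδdef] at hδ4 ⊢; linarith)
        _ ≤ ν S' := hS'ν
        _ ≤ _ := h2
    exact (ENNReal.add_le_add_iff_right ENNReal.ofReal_ne_top).1 h3
  · -- fiberwise covering bound
    rintro y ⟨hyS', hyA⟩
    haveI := hdis.prob y
    have hM0M : hamCov T (μy y) Q' Fn (δ ^ 4) ≤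
        sInf {M : ℕ | ∃ S : Set Y, MeasurableSet S ∧ ENNReal.ofReal (1 - δ ^ 4) ≤ ν S ∧
          ∀ y ∈ S, hamCov T (μy y) Q' Fn (δ ^ 4) ≤ M} := hS'cov y hyS'
    set M0 := hamCov T (μy y) Q' Fn (δ ^ 4) with hM0def
    obtain ⟨E, hEd, hEc⟩ := Nat.sInf_mem
      (⟨_, fullCover_mem T (μy y) Q' Fn (by positivity : (0:ℝ) ≤ δ ^ 4)⟩ :
        Set.Nonempty {M : ℕ | ∃ E : Fin M → Set X, (∀ i, diamLE T Q' Fn (E i) (δ ^ 4)) ∧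
          ENNReal.ofReal (1 - δ ^ 4) ≤ (μy y) (⋃ i, E i)})
    refine Nat.sInf_le ⟨fun j => if h : (j : ℕ) < M0 then E ⟨j, h⟩ ∩ Bᶜ else ∅, ?_, ?_⟩
    · -- diameters
      intro j
      dsimp only
      by_cases h : (j : ℕ) < M0
      · rw [dif_pos h]
        rintro x ⟨hxE, hxB⟩ x' ⟨hx'E, hx'B⟩
        have hx1 : (cnt x : ℝ) < δ ^ 2 * N := by
          by_contra hc
          exact hxB (by rw [hBdef]; exact Set.mem_setOf_eq ▸ not_lt.1 hc)
        have hx'1 : (cnt x' : ℝ) < δ ^ 2 * N := by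
          by_contra hc
          exact hx'B (by rw [hBdef]; exact Set.mem_setOf_eq ▸ not_lt.1 hc)
        have hQ'd : hamDist T Q' Fn x x' ≤ δ ^ 4 := hEd ⟨j, h⟩ x hxE x' hx'E
        have hQ'card : ((Fn.filter fun f => Q' (T f x) ≠ Q' (T f x')).card : ℝ) ≤ δ ^ 4 * N :=
          (div_le_iff₀ hN0).1 hQ'd
        have hsubset : (Fn.filter fun f => Q (T f x) ≠ Q (T f x')) ⊆
            ((Fn.filter fun f => Q' (T f x) ≠ Q' (T f x')) ∪
              (Fn.filter fun f => Q (T f x) ≠ Q' (T f x))) ∪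
              (Fn.filter fun f => Q (T f x') ≠ Q' (T f x')) := by
          intro f hf
          simp only [Finset.mem_filter, Finset.mem_union] at hf ⊢
          by_cases h1 : Q (T f x) = Q' (T f x)
          · by_cases h2 : Q (T f x') = Q' (T f x')
            · exact Or.inl (Or.inl ⟨hf.1, fun he => hf.2 (h1.trans (he.trans h2.symm))⟩)
            · exact Or.inr ⟨hf.1, h2⟩
          · exact Or.inl (Or.inr ⟨hf.1, h1⟩)
        have hcx : (Fn.filter fun f => Q (T f x) ≠ Q' (T f x)).card = cnt x := rfl
        have hcx' : (Fn.filter fun f => Q (T f x') ≠ Q' (T f x')).card = cnt x' := rfl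
        have hnat : (Fn.filter fun f => Q (T f x) ≠ Q (T f x')).card ≤
            (Fn.filter fun f => Q' (T f x) ≠ Q' (T f x')).card + cnt x + cnt x' := by
          have h1 := Finset.card_le_card hsubset
          have h2 := Finset.card_union_le
            ((Fn.filter fun f => Q' (T f x) ≠ Q' (T f x')) ∪
              (Fn.filter fun f => Q (T f x) ≠ Q' (T f x)))
            (Fn.filter fun f => Q (T f x') ≠ Q' (T f x'))
          have h3 := Finset.card_union_le (Fn.filter fun f => Q' (T f x) ≠ Q' (T f x'))
            (Fn.filter fun f => Q (T f x) ≠ Q' (T f x))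
          rw [hcx, hcx'] at *
          omega
        have hcard : ((Fn.filter fun f => Q (T f x) ≠ Q (T f x')).card : ℝ) ≤
            ((Fn.filter fun f => Q' (T f x) ≠ Q' (T f x')).card : ℝ) + cnt x + cnt x' := by
          exact_mod_cast hnat
        show hamDist T Q Fn x x' ≤ ε
        rw [hamDist, div_le_iff₀ hN0]
        have hmul : δ ^ 4 * N + δ ^ 2 * N + δ ^ 2 * N ≤ ε * N := by nlinarith
        linarith
      · rw [dif_neg h]
        intro x hx
        exact absurd hx (Set.notMem_empty x)
    · -- measure of the cover
      have hsub2 : (⋃ i, E i) ∩ Bᶜ ⊆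
          ⋃ j : Fin (hamCovRel T μy ν Q' Fn (δ ^ 4)),
            (if h : (j : ℕ) < M0 then E ⟨j, h⟩ ∩ Bᶜ else ∅) := by
        rintro x ⟨hxU, hxB⟩
        obtain ⟨i, hxi⟩ := Set.mem_iUnion.1 hxU
        refine Set.mem_iUnion.2 ⟨Fin.castLE hM0M i, ?_⟩
        have hlt : ((Fin.castLE hM0M i : Fin _) : ℕ) < M0 := i.isLt
        have key : (if h : ((Fin.castLE hM0M i : Fin _) : ℕ) < M0 then E ⟨_, h⟩ ∩ Bᶜ else ∅)
            = E ⟨_, hlt⟩ ∩ Bᶜ := dif_pos hlt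
        exact (congrArg (x ∈ ·) key).mpr ⟨hxi, hxB⟩
      have hchain : ENNReal.ofReal (1 - ε) + ENNReal.ofReal δ ≤
          μy y (⋃ j : Fin (hamCovRel T μy ν Q' Fn (δ ^ 4)),
            (if h : (j : ℕ) < M0 then E ⟨j, h⟩ ∩ Bᶜ else ∅)) + ENNReal.ofReal δ := by
        calc ENNReal.ofReal (1 - ε) + ENNReal.ofReal δ
            = ENNReal.ofReal (1 - ε + δ) := (ENNReal.ofReal_add (by linarith) hδ0.le).symm
          _ ≤ ENNReal.ofReal (1 - δ ^ 4) := ENNReal.ofReal_le_ofReal (by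
              rw [hδdef] at hδ4 ⊢; linarith)
          _ ≤ μy y (⋃ i, E i) := hEc
          _ ≤ μy y ((⋃ i, E i) ∩ Bᶜ) + μy y ((⋃ i, E i) \ Bᶜ) :=
              measure_le_inter_add_diff _ _ _
          _ ≤ _ := by
              refine add_le_add (measure_mono hsub2) ?_
              refine (measure_mono fun x hx => ?_).trans hyA
              exact not_not.1 hx.2
      exact (ENNReal.add_le_add_iff_right ENNReal.ofReal_ne_top).1 hchain
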